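/- Let v ∈ H²(Ω;ℝ²) be divergence-free on the 2D torus. Then ∫_Ω Δv · (v·∇v) dx = 0. -/

import Mathlib

open MeasureTheory

noncomputable section

open Set

abbrev E2 : Type := EuclideanSpace ℝ (Fin 2)


lemma insertNth_one_eq (α : Fin (1+1)) (x : Fin 1 → ℝ) :
    (α.insertNth (1:ℝ) x : Fin (1+1) → ℝ)
      = (α.insertNth (0:ℝ) x : Fin (1+1) → ℝ) + Pi.single α 1 := by
  funext j
  refine Fin.succAboveCases α ?_ ?_ j
  · simp
  · intro k
    simp [Fin.insertNth_apply_succAbove, Pi.single_eq_of_ne (Fin.succAbove_ne α k)]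

lemma integral_pd_pi (H : (Fin 2 → ℝ) → ℝ) (hH : ContDiff ℝ 1 H)
    (hper : ∀ (x) (i : Fin 2), H (x + Pi.single i 1) = H x) (α : Fin 2) :
    ∫ x in Set.Icc (0 : Fin 2 → ℝ) 1, fderiv ℝ H x (Pi.single α 1) = 0 := by
  have hd : Differentiable ℝ H := hH.differentiable one_ne_zero
  have hfc : Continuous fun x => fderiv ℝ H x (Pi.single α 1) :=
    (hH.continuous_fderiv one_ne_zero).clm_apply continuous_const
  set f : Fin 2 → (Fin 2 → ℝ) → ℝ := fun i x => if i = α then H x else 0 with hf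
  set f' : Fin 2 → (Fin 2 → ℝ) → (Fin 2 → ℝ) →L[ℝ] ℝ :=
    fun i x => if i = α then fderiv ℝ H x else 0 with hf'
  have hsum : ∀ x, (∑ i, f' i x (Pi.single i 1)) = fderiv ℝ H x (Pi.single α 1) := by
    intro x
    rw [hf']
    fin_cases α <;> simp [Fin.sum_univ_two]
  have key := integral_divergence_of_hasFDerivAt_off_countable' (n := 1)
      (0 : Fin 2 → ℝ) 1 (fun i => by norm_num) f f' ∅ Set.countable_empty
      (fun i => by
        by_cases h : i = α <;> simp only [hf, h, if_pos, if_neg, ite_true, ite_false] <;>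
          [exact hH.continuous.continuousOn; exact continuousOn_const])
      (fun x _ i => by
        by_cases h : i = α
        · simpa only [hf, hf', h, ite_true] using (hd x).hasFDerivAt
        · simpa only [hf, hf', h, ite_false] using hasFDerivAt_const (0:ℝ) x)
      (by
        refine (hfc.continuousOn.integrableOn_compact isCompact_Icc).congr_fun ?_
          measurableSet_Icc
        intro x _; exact (hsum x).symm)
  rw [setIntegral_congr_fun measurableSet_Icc (fun x _ => (hsum x).symm)]
  rw [key]
  refine Finset.sum_eq_zero fun i _ => ?_
  by_cases h : i = α
  · subst h
    have : ∀ x : Fin 1 → ℝ, f i (i.insertNth ((1 : Fin 2 → ℝ) i) x)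
        = f i (i.insertNth ((0 : Fin 2 → ℝ) i) x) := by
      intro x
      simp only [hf, ite_true, Pi.one_apply, Pi.zero_apply, if_pos rfl]
      rw [insertNth_one_eq, hper]
    rw [setIntegral_congr_fun measurableSet_Icc (fun x _ => this x), sub_self]
  · simp only [hf, if_neg h]
    simp

/-- The standard fundamental cell `(0,1)²` of the two-dimensional torus. -/
def Torus : Set (EuclideanSpace ℝ (Fin 2)) := {x | ∀ i : Fin 2, x i ∈ Set.Ioo (0 : ℝ) 1}

/-- `f` is `1`-periodic in each coordinate direction. -/
def IsPer {F : Type*} (f : EuclideanSpace ℝ (Fin 2) → F) : Prop :=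
  ∀ (x : EuclideanSpace ℝ (Fin 2)) (i : Fin 2), f (x + EuclideanSpace.single i 1) = f x

lemma preimage_torus :
    (MeasurableEquiv.toLp 2 (Fin 2 → ℝ)) ⁻¹' Torus
      = Set.pi Set.univ (fun _ : Fin 2 => Set.Ioo (0:ℝ) 1) := by
  ext y
  simp only [Set.mem_preimage, Set.mem_pi, Set.mem_univ, forall_true_left]
  rfl

lemma measurableSet_torus : MeasurableSet Torus := by
  have : Torus = ⋂ i : Fin 2, (fun x : E2 => x i) ⁻¹' Set.Ioo (0:ℝ) 1 := by
    ext x; simp [Torus, Set.mem_iInter]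
  rw [this]
  exact MeasurableSet.iInter fun i => ((measurable_pi_apply i).comp (WithLp.measurable_ofLp _ _)) measurableSet_Ioo

lemma torus_transfer (g : E2 → ℝ) :
    ∫ x in Torus, g x
      = ∫ y in Set.Icc (0 : Fin 2 → ℝ) 1,
          g ((MeasurableEquiv.toLp 2 (Fin 2 → ℝ)) y) := by
  have hmp : MeasurePreserving (MeasurableEquiv.toLp 2 (Fin 2 → ℝ)) :=
    (EuclideanSpace.volume_preserving_symm_measurableEquiv_toLp (Fin 2)).symm
  rw [← hmp.map_eq, setIntegral_map_equiv, preimage_torus]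
  refine setIntegral_congr_set ?_
  rw [volume_pi]
  exact MeasureTheory.Measure.univ_pi_Ioo_ae_eq_Icc

lemma integrableOn_torus {g : E2 → ℝ} (hg : Continuous g) : IntegrableOn g Torus := by
  have hmp : MeasurePreserving (MeasurableEquiv.toLp 2 (Fin 2 → ℝ)) :=
    (EuclideanSpace.volume_preserving_symm_measurableEquiv_toLp (Fin 2)).symm
  rw [IntegrableOn, ← hmp.map_eq,
    Measure.restrict_map (MeasurableEquiv.toLp 2 (Fin 2 → ℝ)).measurable
      measurableSet_torus,
    (MeasurableEquiv.toLp 2 (Fin 2 → ℝ)).measurableEmbedding.integrable_map_iff,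
    preimage_torus]
  have hc : Continuous (g ∘ (MeasurableEquiv.toLp 2 (Fin 2 → ℝ))) := by
    exact hg.comp (PiLp.continuousLinearEquiv 2 ℝ (fun _ : Fin 2 => ℝ)).symm.continuous
  have : IntegrableOn (g ∘ (MeasurableEquiv.toLp 2 (Fin 2 → ℝ)))
      (Set.Icc (0 : Fin 2 → ℝ) 1) volume :=
    hc.continuousOn.integrableOn_compact isCompact_Icc
  refine this.mono_set ?_
  rw [← Set.pi_univ_Icc]
  exact Set.pi_mono fun i _ => Set.Ioo_subset_Icc_self

lemma integral_pd_torus (H : E2 → ℝ) (hH : ContDiff ℝ 1 H) (hper : IsPer H) (α : Fin 2) :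
    ∫ x in Torus, fderiv ℝ H x (EuclideanSpace.single α 1) = 0 := by
  set L := (PiLp.continuousLinearEquiv 2 ℝ (fun _ : Fin 2 => ℝ)) with hL
  set G : (Fin 2 → ℝ) → ℝ := H ∘ L.symm with hG
  have h1 : ∀ y : Fin 2 → ℝ,
      fderiv ℝ G y (Pi.single α 1)
        = fderiv ℝ H ((MeasurableEquiv.toLp 2 (Fin 2 → ℝ)) y)
            (EuclideanSpace.single α 1) := by
    intro y
    rw [hG, L.symm.comp_right_fderiv]
    rfl
  rw [torus_transfer]
  rw [setIntegral_congr_fun measurableSet_Icc (fun y _ => (h1 y).symm)]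
  refine integral_pd_pi G (hH.comp L.symm.contDiff) ?_ α
  intro y i
  have : L.symm (y + Pi.single i 1) = L.symm y + EuclideanSpace.single i 1 := by
    rw [map_add]; rfl
  rw [hG]
  simp only [Function.comp_apply, this]
  exact hper _ i

noncomputable def pd (f : E2 → ℝ) (i : Fin 2) (x : E2) : ℝ := fderiv ℝ f x (EuclideanSpace.single i 1)

lemma contDiff_pd {n : ℕ} {f : E2 → ℝ} (hf : ContDiff ℝ (n+1 : ℕ) f) (i : Fin 2) :
    ContDiff ℝ n (pd f i) := by
  have h1 : ContDiff ℝ n (fderiv ℝ f) := hf.fderiv_right (by exact_mod_cast le_refl _)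
  exact h1.clm_apply contDiff_const

lemma continuous_pd {f : E2 → ℝ} (hf : ContDiff ℝ 1 f) (i : Fin 2) :
    Continuous (pd f i) :=
  (hf.continuous_fderiv one_ne_zero).clm_apply continuous_const

lemma fderiv_shift (f : E2 → ℝ) (c : E2) (x : E2) :
    fderiv ℝ (fun y => f (y + c)) x = fderiv ℝ f (x + c) := by
  by_cases h : DifferentiableAt ℝ f (x + c)
  · have := (h.hasFDerivAt.comp x ((hasFDerivAt_id x).add_const c)).fderiv
    simpa [Function.comp_def] using this
  · rw [fderiv_zero_of_not_differentiableAt h, fderiv_zero_of_not_differentiableAt]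
    intro h'
    apply h
    have h'' : DifferentiableAt ℝ (fun y => f (y + c)) (x + c - c) := by
      simpa using h'
    have h2 := h''.comp (x + c) ((differentiableAt_id).sub_const c)
    simpa [Function.comp_def] using h2

lemma isPer_pd {f : E2 → ℝ} (hf : IsPer f) (i : Fin 2) : IsPer (pd f i) := by
  intro x j
  unfold pd
  have hfun : (fun y => f (y + EuclideanSpace.single j 1)) = f := funext fun y => hf y j
  rw [← fderiv_shift f (EuclideanSpace.single j 1) x, hfun]

lemma pd_comm {f : E2 → ℝ} (hf : ContDiff ℝ 2 f) (a b : Fin 2) (x : E2) :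
    pd (pd f a) b x = pd (pd f b) a x := by
  have hsymm : IsSymmSndFDerivAt ℝ f x :=
    hf.contDiffAt.isSymmSndFDerivAt (by norm_num)
  have hdiff : DifferentiableAt ℝ (fderiv ℝ f) x := by
    have : ContDiff ℝ 1 (fderiv ℝ f) := hf.fderiv_right (by norm_num)
    exact (this.differentiable one_ne_zero) x
  have key : ∀ w u : E2, fderiv ℝ (fun y => fderiv ℝ f y w) x u
      = fderiv ℝ (fderiv ℝ f) x u w := by
    intro w u
    rw [fderiv_clm_apply hdiff (differentiableAt_const w)]
    simp
  unfold pd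
  rw [key, key]
  exact hsymm _ _

lemma pd_mul {F G : E2 → ℝ} {x : E2} (hF : DifferentiableAt ℝ F x)
    (hG : DifferentiableAt ℝ G x) (i : Fin 2) :
    pd (fun y => F y * G y) i x = pd F i x * G x + F x * pd G i x := by
  unfold pd
  rw [fderiv_fun_mul hF hG]
  simp
  ring

lemma pd_sum {F : Fin 2 → E2 → ℝ} {x : E2} (hF : ∀ k, DifferentiableAt ℝ (F k) x) (i : Fin 2) :
    pd (fun y => ∑ k, F k y) i x = ∑ k, pd (F k) i x := by
  unfold pd
  rw [fderiv_fun_sum (fun k _ => hF k)]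
  simp

lemma ibp (F G : E2 → ℝ) (hF : ContDiff ℝ 1 F) (hG : ContDiff ℝ 1 G)
    (pF : IsPer F) (pG : IsPer G) (α : Fin 2) :
    ∫ x in Torus, pd F α x * G x = - ∫ x in Torus, F x * pd G α x := by
  have hper : IsPer (fun x => F x * G x) := fun x i => by
    show F _ * G _ = F x * G x
    rw [pF x i, pG x i]
  have h0 := integral_pd_torus (fun x => F x * G x) (hF.mul hG) hper α
  have hpt : ∀ x : E2, fderiv ℝ (fun y => F y * G y) x (EuclideanSpace.single α 1)
      = pd F α x * G x + F x * pd G α x := fun x =>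
    pd_mul (hF.differentiable one_ne_zero x) (hG.differentiable one_ne_zero x) α
  rw [setIntegral_congr_fun measurableSet_torus (fun x _ => hpt x)] at h0
  have i1 : IntegrableOn (fun x => pd F α x * G x) Torus :=
    integrableOn_torus ((continuous_pd hF α).mul hG.continuous)
  have i2 : IntegrableOn (fun x => F x * pd G α x) Torus :=
    integrableOn_torus (hF.continuous.mul (continuous_pd hG α))
  rw [integral_add i1 i2] at h0
  linarith

noncomputable def Amat (v : E2 → Fin 2 → ℝ) (j i : Fin 2) : E2 → ℝ :=
  pd (fun z => v z j) i

noncomputable def Nvec (v : E2 → Fin 2 → ℝ) (j : Fin 2) : E2 → ℝ :=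
  fun x => ∑ i, v x i * Amat v j i x

noncomputable def gfun (v : E2 → Fin 2 → ℝ) : E2 → ℝ :=
  fun x => ∑ j, ∑ α, Amat v j α x * Amat v j α x

/-- The Laplacian of the `j`-th component of a vector field `v : ℝ² → ℝ²`. -/
noncomputable def lapComp (v : EuclideanSpace ℝ (Fin 2) → Fin 2 → ℝ) (j : Fin 2)
    (x : EuclideanSpace ℝ (Fin 2)) : ℝ :=
  ∑ α : Fin 2,
    fderiv ℝ (fun y => fderiv ℝ (fun z => v z j) y (EuclideanSpace.single α 1)) x
      (EuclideanSpace.single α 1)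

/-- For a divergence-free periodic `H²` (here `C²`) vector field `v` on the 2D torus:
`∫_Ω Δv · (v·∇v) dx = 0`. -/
theorem laplacian_convection_orthogonal
    (v : EuclideanSpace ℝ (Fin 2) → Fin 2 → ℝ)
    (hv : ContDiff ℝ 2 v) (hper : IsPer v)
    (hdiv : ∀ x, ∑ i : Fin 2, fderiv ℝ (fun y => v y i) x (EuclideanSpace.single i 1) = 0) :
    ∫ x in Torus,
        ∑ j : Fin 2, lapComp v j x *
          ∑ i : Fin 2, v x i * fderiv ℝ (fun y => v y j) x (EuclideanSpace.single i 1)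
      = 0 := by
  classical
  have hvcomp : ∀ j, ContDiff ℝ 2 (fun z => v z j) := fun j =>
    (ContinuousLinearMap.proj (R := ℝ) (φ := fun _ : Fin 2 => ℝ) j).contDiff.comp hv
  have hA2cast : ∀ j, ContDiff ℝ ((1 + 1 : ℕ) : ℕ∞) (fun z => v z j) := fun j => by
    exact_mod_cast hvcomp j
  have hA1 : ∀ j i, ContDiff ℝ 1 (Amat v j i) := fun j i => by
    have := contDiff_pd (n := 1) (hA2cast j) i
    exact_mod_cast this
  have hvper : ∀ j, IsPer (fun z => v z j) := fun j x i => congrFun (hper x i) j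
  have hAper : ∀ j i, IsPer (Amat v j i) := fun j i => isPer_pd (hvper j) i
  have hv1 : ∀ j, ContDiff ℝ 1 (fun z => v z j) := fun j => (hvcomp j).of_le one_le_two
  have hN1 : ∀ j, ContDiff ℝ 1 (Nvec v j) := fun j =>
    ContDiff.sum fun i _ => (hv1 i).mul (hA1 j i)
  have hNper : ∀ j, IsPer (Nvec v j) := fun j x k => by
    unfold Nvec
    exact Finset.sum_congr rfl fun i _ => by
      rw [show v (x + EuclideanSpace.single k 1) i = v x i from congrFun (hper x k) i,
        hAper j i x k]
  have hg1 : ContDiff ℝ 1 (gfun v) :=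
    ContDiff.sum fun j _ => ContDiff.sum fun α _ => (hA1 j α).mul (hA1 j α)
  have hgper : IsPer (gfun v) := fun x k => by
    unfold gfun
    exact Finset.sum_congr rfl fun j _ => Finset.sum_congr rfl fun α _ => by
      rw [hAper j α x k]
  have htr : ∀ x, Amat v 0 0 x + Amat v 1 1 x = 0 := fun x => by
    have h := hdiv x
    rw [Fin.sum_univ_two] at h
    exact h
  -- Step 1 : rewl integrand
  have step1 : ∀ x : E2, (∑ j : Fin 2, lapComp v j x *
        ∑ i : Fin 2, v x i * fderiv ℝ (fun y => v y j) x (EuclideanSpace.single i 1))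
      = ∑ j : Fin 2, ∑ α : Fin 2, pd (Amat v j α) α x * Nvec v j x := by
    intro x
    refine Finset.sum_congr rfl fun j _ => ?_
    show (∑ α : Fin 2, pd (Amat v j α) α x) * Nvec v j x = _
    exact Finset.sum_mul _ _ _
  have e1 := setIntegral_congr_fun (μ := volume) measurableSet_torus
      (fun x (_ : x ∈ Torus) => step1 x)
  rw [e1]
  -- Step 2 : split integral of double sum
  have e2 : (∫ x in Torus, ∑ j : Fin 2, ∑ α : Fin 2, pd (Amat v j α) α x * Nvec v j x)
      = ∑ j : Fin 2, ∑ α : Fin 2, ∫ x in Torus, pd (Amat v j α) α x * Nvec v j x := by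
    rw [integral_finset_sum _ (fun j _ => integrable_finset_sum _ (fun α _ =>
      integrableOn_torus (g := fun x => pd (Amat v j α) α x * Nvec v j x) ((continuous_pd (hA1 j α) α).mul (hN1 j).continuous)))]
    exact Finset.sum_congr rfl fun j _ => integral_finset_sum _ fun α _ =>
      integrableOn_torus ((continuous_pd (hA1 j α) α).mul (hN1 j).continuous)
  rw [e2]
  -- Step 3 : integrate by parts in each term
  have e3 : ∀ j α, (∫ x in Torus, pd (Amat v j α) α x * Nvec v j x)
      = - ∫ x in Torus, Amat v j α x * pd (Nvec v j) α x := fun j α =>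
    ibp (Amat v j α) (Nvec v j) (hA1 j α) (hN1 j) (hAper j α) (hNper j) α
  simp only [e3, Finset.sum_neg_distrib, neg_eq_zero]
  -- Step 4 : recombine into a single integral
  have e4 : (∑ j : Fin 2, ∑ α : Fin 2, ∫ x in Torus, Amat v j α x * pd (Nvec v j) α x)
      = ∫ x in Torus, ∑ j : Fin 2, ∑ α : Fin 2, Amat v j α x * pd (Nvec v j) α x := by
    refine Eq.symm ?_
    rw [integral_finset_sum _ (fun j _ => integrable_finset_sum _ (fun α _ =>
      integrableOn_torus (g := fun x => Amat v j α x * pd (Nvec v j) α x) ((hA1 j α).continuous.mul (continuous_pd (hN1 j) α))))]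
    exact Finset.sum_congr rfl fun j _ => integral_finset_sum _ fun α _ =>
      integrableOn_torus ((hA1 j α).continuous.mul (continuous_pd (hN1 j) α))
  rw [e4]
  -- Step 5 : pointwise identity
  have hkey : ∀ x : E2, (∑ j : Fin 2, ∑ α : Fin 2, Amat v j α x * pd (Nvec v j) α x)
      = (1/2) * ∑ i : Fin 2, v x i * pd (gfun v) i x := by
    intro x
    have hNpd : ∀ j α, pd (Nvec v j) α x
        = ∑ i : Fin 2, (Amat v i α x * Amat v j i x + v x i * pd (Amat v j i) α x) := by
      intro j α
      unfold Nvec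
      rw [pd_sum (F := fun k y => v y k * Amat v j k y) (fun k => ((hv1 k).differentiable one_ne_zero x).mul
        ((hA1 j k).differentiable one_ne_zero x)) α]
      refine Finset.sum_congr rfl fun k _ => ?_
      rw [pd_mul ((hv1 k).differentiable one_ne_zero x) ((hA1 j k).differentiable one_ne_zero x) α]
      show Amat v k α x * Amat v j k x + v x k * pd (Amat v j k) α x = _
      ring
    have hgpd : ∀ i, pd (gfun v) i x
        = ∑ j : Fin 2, ∑ α : Fin 2, 2 * (Amat v j α x * pd (Amat v j i) α x) := by
      intro i
      unfold gfun
      rw [pd_sum (fun j => Differentiable.differentiableAt (by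
        exact (ContDiff.sum fun α _ => (hA1 j α).mul (hA1 j α)).differentiable one_ne_zero)) i]
      refine Finset.sum_congr rfl fun j _ => ?_
      rw [pd_sum (F := fun α y => Amat v j α y * Amat v j α y) (fun α => ((hA1 j α).differentiable one_ne_zero x).mul
        ((hA1 j α).differentiable one_ne_zero x)) i]
      refine Finset.sum_congr rfl fun α _ => ?_
      rw [pd_mul ((hA1 j α).differentiable one_ne_zero x) ((hA1 j α).differentiable one_ne_zero x) i]
      have hswap : pd (Amat v j α) i x = pd (Amat v j i) α x := pd_comm (hvcomp j) α i x
      rw [hswap]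
      ring
    simp only [hNpd, hgpd, Fin.sum_univ_two]
    have htrx := htr x
    ring_nf
    linear_combination (Amat v 0 0 x ^ 2 - Amat v 0 0 x * Amat v 1 1 x + Amat v 1 1 x ^ 2
      + Amat v 0 1 x ^ 2 + Amat v 0 1 x * Amat v 1 0 x + Amat v 1 0 x ^ 2) * htrx
  have e5 := setIntegral_congr_fun (μ := volume) measurableSet_torus
      (fun x (_ : x ∈ Torus) => hkey x)
  rw [e5, integral_const_mul]
  -- Step 6 : final IBP with divergence-free condition
  have e6 : (∫ x in Torus, ∑ i : Fin 2, v x i * pd (gfun v) i x)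
      = ∑ i : Fin 2, ∫ x in Torus, v x i * pd (gfun v) i x :=
    integral_finset_sum _ fun i _ =>
      integrableOn_torus ((hv1 i).continuous.mul (continuous_pd hg1 i))
  rw [e6]
  have e7 : ∀ i : Fin 2, (∫ x in Torus, v x i * pd (gfun v) i x)
      = - ∫ x in Torus, Amat v i i x * gfun v x := by
    intro i
    have := ibp (fun x => v x i) (gfun v) (hv1 i) hg1 (hvper i) hgper i
    -- this : ∫ pd (v·i) i * g = - ∫ v·i * pd g i
    have h2 : (∫ x in Torus, Amat v i i x * gfun v x)
        = - ∫ x in Torus, v x i * pd (gfun v) i x := this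
    linarith [h2]
  simp only [e7, Finset.sum_neg_distrib]
  have e8 : (∑ i : Fin 2, ∫ x in Torus, Amat v i i x * gfun v x)
      = ∫ x in Torus, ∑ i : Fin 2, Amat v i i x * gfun v x := by
    exact (integral_finset_sum _ fun i _ =>
      integrableOn_torus ((hA1 i i).continuous.mul hg1.continuous)).symm
  rw [e8]
  have e9 : ∀ x : E2, (∑ i : Fin 2, Amat v i i x * gfun v x) = 0 := by
    intro x
    rw [← Finset.sum_mul]
    rw [Fin.sum_univ_two, htr x, zero_mul]
  rw [setIntegral_congr_fun (μ := volume) measurableSet_torus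
      (fun x (_ : x ∈ Torus) => e9 x)]
  simp

end
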